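/- Let G be a finite simple graph with vertex set V and edge set E, and let Jσ, Jτ, Jστ ∈ ℝ. Then Σ_{(σ,τ) : V → {−1,1}²} ∏_{{i,j} ∈ E} exp(Jσ σ(i)σ(j) + Jτ τ(i)τ(j) + Jστ σ(i)σ(j)τ(i)τ(j)) = e^{(Jσ+Jτ+Jστ)·|E|} · Σ_{n=(nσ,nτ) : E → {0,1}²} λ(n) · 2^{Nσ(n)} · 2^{Nτ(n)}, where λ(n) = ∏_{e∈E} (a0 if n(e)=(0,0), aσ if n(e)=(1,0), aτ if n(e)=(0,1), aστ if n(e)=(1,1)), with a0 = e^{−2(Jσ+Jτ)}, aσ = e^{−2Jτ}(e^{−2Jστ} − e^{−2Jσ}), aτ = e^{−2Jσ}(e^{−2Jστ} − e^{−2Jτ}), aστ = 1 − e^{−2(Jσ+Jστ)} − e^{−2(Jτ+Jστ)} + e^{−2(Jσ+Jτ)}. -/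
import Mathlib


/-- The spin value `±1` attached to a Boolean. -/
def spin (b : Bool) : ℝ := if b then 1 else -1

/-- The number of connected components of the spanning subgraph of the vertex set `V`
with edge set `F`; isolated vertices count as components. -/
noncomputable def numComp {V : Type*} [Fintype V] (F : Set (Sym2 V)) : ℕ :=
  Nat.card (SimpleGraph.fromEdgeSet F).ConnectedComponent

/-- The Ashkin–Teller Boltzmann weight of an edge, as a function on `Sym2 V`. -/
noncomputable def atWeight {V : Type*} (Jσ Jτ Jστ : ℝ) (σ τ : V → ℝ) : Sym2 V → ℝ :=
  Sym2.lift ⟨fun i j =>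
      Real.exp (Jσ * (σ i * σ j) + Jτ * (τ i * τ j) + Jστ * (σ i * σ j * (τ i * τ j))),
    fun i j => by ring_nf⟩

/-- The weight of an edge state: `(0,0) ↦ a0`, `(1,0) ↦ aσ`, `(0,1) ↦ aτ`, `(1,1) ↦ aστ`. -/
def wt (a0 aσ aτ aστ : ℝ) : Bool × Bool → ℝ
  | (false, false) => a0
  | (true, false) => aσ
  | (false, true) => aτ
  | (true, true) => aστ

/-- The set of edges of `G` declared open by `m`. -/
def openEdges {V : Type*} [Fintype V] [DecidableEq V] (G : SimpleGraph V)
    [DecidableRel G.Adj] (m : G.edgeFinset → Bool) : Set (Sym2 V) :=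
  {e : Sym2 V | ∃ h : e ∈ G.edgeFinset, m ⟨e, h⟩ = true}

/-- Number of clusters of the spanning subgraph with open edges `m`. -/
noncomputable def Ncl {V : Type*} [Fintype V] [DecidableEq V] (G : SimpleGraph V)
    [DecidableRel G.Adj] (m : G.edgeFinset → Bool) : ℕ :=
  numComp (openEdges G m)

-- auxiliary
noncomputable def agree {V : Type*} (σ : V → Bool) : Sym2 V → ℝ :=
  Sym2.lift ⟨fun i j => if σ i = σ j then (1:ℝ) else 0, fun i j => by
    by_cases h : σ i = σ j <;> simp [h, eq_comm]⟩

lemma agree_mk {V : Type*} (σ : V → Bool) (i j : V) :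
    agree σ s(i, j) = if σ i = σ j then 1 else 0 := rfl

lemma walk_const {V : Type*} {H : SimpleGraph V} {σ : V → Bool}
    (hc : ∀ v w, H.Adj v w → σ v = σ w) : ∀ {v w : V}, H.Walk v w → σ v = σ w := by
  intro v w p
  induction p with
  | nil => rfl
  | cons h _ ih => exact (hc _ _ h).trans ih

def compatEquiv {V : Type*} (H : SimpleGraph V) :
    {σ : V → Bool // ∀ v w, H.Adj v w → σ v = σ w} ≃ (H.ConnectedComponent → Bool) where
  toFun σ := SimpleGraph.ConnectedComponent.lift σ.1 (fun _ _ p _ => walk_const σ.2 p)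
  invFun g := ⟨fun v => g (H.connectedComponentMk v), fun v w h =>
    congrArg g ((SimpleGraph.ConnectedComponent.eq).2 h.reachable)⟩
  left_inv σ := Subtype.ext (funext fun v => rfl)
  right_inv g := funext fun c =>
    SimpleGraph.ConnectedComponent.ind (fun v => rfl) c

lemma card_compat {V : Type*} [Fintype V] (H : SimpleGraph V) :
    Nat.card {σ : V → Bool // ∀ v w, H.Adj v w → σ v = σ w}
      = 2 ^ Nat.card H.ConnectedComponent := by
  rw [Nat.card_congr (compatEquiv H), Nat.card_fun]
  simp

lemma sum_indicator {V : Type*} [Fintype V] [DecidableEq V] (G : SimpleGraph V)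
    [DecidableRel G.Adj] (m : G.edgeFinset → Bool) :
    ∑ σ : V → Bool, ∏ e : G.edgeFinset, (if m e then agree σ e.1 else 1)
      = (2 : ℝ) ^ Ncl G m := by
  classical
  set H := SimpleGraph.fromEdgeSet (openEdges G m) with hH
  have hprod : ∀ σ : V → Bool,
      (∏ e : G.edgeFinset, (if m e then agree σ e.1 else 1))
        = if (∀ v w, H.Adj v w → σ v = σ w) then 1 else 0 := by
    intro σ
    by_cases hP : ∀ v w, H.Adj v w → σ v = σ w
    · rw [if_pos hP]
      apply Finset.prod_eq_one
      rintro ⟨e, he⟩ -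
      revert he
      induction e using Sym2.ind with
      | _ i j =>
        intro he
        by_cases hm : m ⟨s(i, j), he⟩ = true
        · have hij' : i ≠ j :=
            ((SimpleGraph.mem_edgeSet G).1 (SimpleGraph.mem_edgeFinset.1 he)).ne
          have hadj : H.Adj i j := by
            rw [hH, SimpleGraph.fromEdgeSet_adj]
            exact ⟨⟨he, hm⟩, hij'⟩
          show (if m ⟨s(i,j), he⟩ = true then agree σ s(i,j) else 1) = 1
          rw [if_pos hm, agree_mk, if_pos (hP _ _ hadj)]
        · show (if m ⟨s(i,j), he⟩ = true then agree σ s(i,j) else 1) = 1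
          rw [if_neg hm]
    · rw [if_neg hP]
      push_neg at hP
      obtain ⟨v, w, hadj, hne⟩ := hP
      have hmem : s(v, w) ∈ openEdges G m := ((SimpleGraph.fromEdgeSet_adj _).1 hadj).1
      obtain ⟨he, hm⟩ := hmem
      refine Finset.prod_eq_zero (Finset.mem_univ (⟨s(v,w), he⟩ : G.edgeFinset)) ?_
      rw [if_pos hm, agree_mk, if_neg hne]
  simp_rw [hprod]
  rw [Finset.sum_boole]
  have h1 : (Finset.univ.filter fun σ : V → Bool => ∀ v w, H.Adj v w → σ v = σ w).card
      = Nat.card {σ : V → Bool // ∀ v w, H.Adj v w → σ v = σ w} := by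
    rw [Nat.card_eq_fintype_card, Fintype.card_subtype]
  rw [h1, card_compat]
  push_cast
  rfl

lemma edge_id {V : Type*} (Jσ Jτ Jστ : ℝ) (σ τ : V → Bool) (e : Sym2 V) :
    atWeight Jσ Jτ Jστ (fun i => spin (σ i)) (fun i => spin (τ i)) e
      = Real.exp (Jσ + Jτ + Jστ) *
        ∑ b : Bool × Bool,
          wt (Real.exp (-2 * (Jσ + Jτ)))
             (Real.exp (-2 * Jτ) * (Real.exp (-2 * Jστ) - Real.exp (-2 * Jσ)))
             (Real.exp (-2 * Jσ) * (Real.exp (-2 * Jστ) - Real.exp (-2 * Jτ)))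
             (1 - Real.exp (-2 * (Jσ + Jστ)) - Real.exp (-2 * (Jτ + Jστ)) +
                Real.exp (-2 * (Jσ + Jτ))) b *
          ((if b.1 then agree σ e else 1) * (if b.2 then agree τ e else 1)) := by
  induction e using Sym2.ind with
  | _ i j =>
    have hAB : Real.exp (-2 * (Jσ + Jτ)) = Real.exp (-2 * Jσ) * Real.exp (-2 * Jτ) := by
      rw [show -2 * (Jσ + Jτ) = -2 * Jσ + -2 * Jτ by ring, Real.exp_add]
    have hAC : Real.exp (-2 * (Jσ + Jστ)) = Real.exp (-2 * Jσ) * Real.exp (-2 * Jστ) := by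
      rw [show -2 * (Jσ + Jστ) = -2 * Jσ + -2 * Jστ by ring, Real.exp_add]
    have hBC : Real.exp (-2 * (Jτ + Jστ)) = Real.exp (-2 * Jτ) * Real.exp (-2 * Jστ) := by
      rw [show -2 * (Jτ + Jστ) = -2 * Jτ + -2 * Jστ by ring, Real.exp_add]
    have hspin : ∀ a b : Bool, spin a * spin b = if a = b then (1:ℝ) else -1 := by
      intro a b; cases a <;> cases b <;> simp [spin]
    rw [atWeight, Sym2.lift_mk]
    simp only [Fintype.sum_prod_type, Fintype.sum_bool, wt, agree_mk, hspin]
    by_cases h1 : σ i = σ j <;> by_cases h2 : τ i = τ j <;>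
      simp only [h1, h2, if_true, if_false, Bool.false_eq_true, mul_one, one_mul, mul_zero,
        zero_mul, add_zero, zero_add] <;>
      simp only [hAB, hAC, hBC]
    · ring
    · rw [show Real.exp (Jσ + Jτ * -1 + Jστ * -1)
            = Real.exp (Jσ + Jτ + Jστ) * (Real.exp (-2 * Jτ) * Real.exp (-2 * Jστ)) from by
          rw [← Real.exp_add, ← Real.exp_add]; congr 1; ring]
      ring
    · rw [show Real.exp (Jσ * -1 + Jτ + Jστ * -1)
            = Real.exp (Jσ + Jτ + Jστ) * (Real.exp (-2 * Jσ) * Real.exp (-2 * Jστ)) from by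
          rw [← Real.exp_add, ← Real.exp_add]; congr 1; ring]
      ring
    · rw [show Real.exp (Jσ * -1 + Jτ * -1 + Jστ * (-1 * -1))
            = Real.exp (Jσ + Jτ + Jστ) * (Real.exp (-2 * Jσ) * Real.exp (-2 * Jτ)) from by
          rw [← Real.exp_add, ← Real.exp_add]; congr 1; ring]

/-- the Ashkin–Teller partition function with free boundary condition
equals `e^{(Jσ+Jτ+Jστ)|E|}` times the generalized random-cluster partition function
with weights `a0, aσ, aτ, aστ` and `qσ = qτ = 2`. -/
theorem stmt10 {V : Type*} [Fintype V] [DecidableEq V] (G : SimpleGraph V)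
    [DecidableRel G.Adj] (Jσ Jτ Jστ : ℝ) :
    ∑ στ : (V → Bool) × (V → Bool),
        ∏ e ∈ G.edgeFinset, atWeight Jσ Jτ Jστ (fun i => spin (στ.1 i)) (fun i => spin (στ.2 i)) e
    = Real.exp ((Jσ + Jτ + Jστ) * (G.edgeFinset.card : ℝ)) *
      ∑ n : G.edgeFinset → Bool × Bool,
        (∏ e : G.edgeFinset,
            wt (Real.exp (-2 * (Jσ + Jτ)))
               (Real.exp (-2 * Jτ) * (Real.exp (-2 * Jστ) - Real.exp (-2 * Jσ)))
               (Real.exp (-2 * Jσ) * (Real.exp (-2 * Jστ) - Real.exp (-2 * Jτ)))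
               (1 - Real.exp (-2 * (Jσ + Jστ)) - Real.exp (-2 * (Jτ + Jστ)) +
                  Real.exp (-2 * (Jσ + Jτ)))
               (n e)) *
          2 ^ Ncl G (fun e => (n e).1) * 2 ^ Ncl G (fun e => (n e).2) := by
  classical
  have key : ∀ σ τ : V → Bool,
      ∏ e ∈ G.edgeFinset, atWeight Jσ Jτ Jστ (fun i => spin (σ i)) (fun i => spin (τ i)) e
      = Real.exp (Jσ + Jτ + Jστ) ^ G.edgeFinset.card *
        ∑ n : G.edgeFinset → Bool × Bool,
          ∏ e : G.edgeFinset,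
            (wt (Real.exp (-2 * (Jσ + Jτ)))
               (Real.exp (-2 * Jτ) * (Real.exp (-2 * Jστ) - Real.exp (-2 * Jσ)))
               (Real.exp (-2 * Jσ) * (Real.exp (-2 * Jστ) - Real.exp (-2 * Jτ)))
               (1 - Real.exp (-2 * (Jσ + Jστ)) - Real.exp (-2 * (Jτ + Jστ)) +
                  Real.exp (-2 * (Jσ + Jτ)))
               (n e) *
              ((if (n e).1 then agree σ e.1 else 1) * (if (n e).2 then agree τ e.1 else 1))) := by
    intro σ τ
    rw [← Finset.prod_attach G.edgeFinset, ← Finset.univ_eq_attach]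
    simp_rw [edge_id Jσ Jτ Jστ σ τ]
    rw [Finset.prod_mul_distrib, Finset.prod_const, Finset.card_univ, Fintype.card_coe,
      Finset.prod_univ_sum, Fintype.piFinset_univ]
  simp_rw [key]
  rw [← Finset.mul_sum, Finset.sum_comm,
    show ((Jσ + Jτ + Jστ) * (G.edgeFinset.card : ℝ))
        = (G.edgeFinset.card : ℕ) * (Jσ + Jτ + Jστ) from by push_cast; ring,
    Real.exp_nat_mul]
  congr 1
  apply Finset.sum_congr rfl
  intro n _
  simp_rw [Finset.prod_mul_distrib]
  rw [← Finset.mul_sum, Fintype.sum_prod_type]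
  simp only
  rw [← Finset.sum_mul_sum Finset.univ Finset.univ
      (fun σ : V → Bool => ∏ e : G.edgeFinset, if (n e).1 then agree σ e.1 else 1)
      (fun τ : V → Bool => ∏ e : G.edgeFinset, if (n e).2 then agree τ e.1 else 1),
    sum_indicator G (fun e => (n e).1), sum_indicator G (fun e => (n e).2)]
  ring
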